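/- If S is a locally maximal product-free set of size 3 in a finite group G and the subgroup ⟨S⟩ generated by S is cyclic, then |⟨S⟩| ≤ 22. -/

import Mathlib

open scoped Pointwise

def productFree {G : Type*} [Group G] (S : Set G) : Prop :=
  ∀ a ∈ S, ∀ b ∈ S, a * b ∉ S

def locallyMaximalPF {G : Type*} [Group G] (S : Set G) : Prop :=
  productFree S ∧ ∀ T : Set G, productFree T → S ⊆ T → T = S

open Classical in
lemma sqrt_ncard_le {G : Type*} [Group G] [Fintype G] (H : Subgroup G)
    (hcyc : IsCyclic H) (s : G) : {g : G | g ∈ H ∧ g * g = s}.ncard ≤ 2 := by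
  classical
  by_cases hne : {g : G | g ∈ H ∧ g * g = s} = ∅
  · simp [hne]
  · obtain ⟨y, hyH, hys⟩ : ∃ y, y ∈ H ∧ y * y = s := by
      rcases Set.nonempty_iff_ne_empty.mpr hne with ⟨y, hy⟩
      exact ⟨y, hy.1, hy.2⟩
    letI : CommGroup H := hcyc.commGroup
    have hcomm : ∀ x ∈ H, ∀ z ∈ H, x * z = z * x := by
      intro x hx z hz
      have := mul_comm (⟨x, hx⟩ : H) ⟨z, hz⟩
      exact Subtype.ext_iff.mp this
    set T : Set G := {z : G | z ∈ H ∧ z * z = 1} with hT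
    have hmap : {g : G | g ∈ H ∧ g * g = s}.ncard ≤ T.ncard := by
      refine Set.ncard_le_ncard_of_injOn (fun g => y⁻¹ * g) ?_ ?_ (Set.toFinite _)
      · rintro g ⟨hgH, hgs⟩
        refine ⟨mul_mem (inv_mem hyH) hgH, ?_⟩
        have h1 : g * y⁻¹ = y⁻¹ * g := hcomm g hgH y⁻¹ (inv_mem hyH)
        calc y⁻¹ * g * (y⁻¹ * g) = y⁻¹ * (g * y⁻¹) * g := by group
          _ = y⁻¹ * (y⁻¹ * g) * g := by rw [h1]
          _ = (y * y)⁻¹ * (g * g) := by group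
          _ = 1 := by rw [hys, hgs, inv_mul_cancel]
      · intro g₁ _ g₂ _ hg
        exact mul_left_cancel hg
    have hTim : T = Subtype.val '' {z : H | z * z = 1} := by
      ext z
      constructor
      · rintro ⟨hzH, hz1⟩
        exact ⟨⟨z, hzH⟩, Subtype.ext hz1, rfl⟩
      · rintro ⟨w, hw, rfl⟩
        exact ⟨w.2, Subtype.ext_iff.mp hw⟩
    have hU : ({z : H | z * z = 1} : Set H).ncard ≤ 2 := by
      letI : Fintype H := Fintype.ofFinite H
      have h2 : (Finset.univ.filter (fun a : H => a ^ 2 = 1)).card ≤ 2 :=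
        IsCyclic.card_pow_eq_one_le (by norm_num)
      have hsub : ({z : H | z * z = 1} : Set H).toFinset ⊆
          Finset.univ.filter (fun a : H => a ^ 2 = 1) := by
        intro z hz
        simp only [Set.mem_toFinset, Set.mem_setOf_eq] at hz
        simp [pow_two, hz]
      calc ({z : H | z * z = 1} : Set H).ncard
          = ({z : H | z * z = 1} : Set H).toFinset.card := Set.ncard_eq_toFinset_card' _
        _ ≤ _ := Finset.card_le_card hsub
        _ ≤ 2 := h2
    calc {g : G | g ∈ H ∧ g * g = s}.ncard ≤ T.ncard := hmap
      _ = ({z : H | z * z = 1} : Set H).ncard := by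
          rw [hTim]; exact Set.ncard_image_of_injective _ Subtype.val_injective
      _ ≤ 2 := hU

lemma cyclic_sub_comm {G : Type*} [Group G] {H : Subgroup G} (hcyc : IsCyclic H) :
    ∀ x ∈ H, ∀ z ∈ H, x * z = z * x := by
  letI : CommGroup H := hcyc.commGroup
  intro x hx z hz
  exact Subtype.ext_iff.mp (mul_comm (⟨x, hx⟩ : H) ⟨z, hz⟩)

theorem stmt5 {G : Type*} [Group G] [Fintype G] (S : Set G) (hcard : S.ncard = 3)
    (h : locallyMaximalPF S) (hcyc : IsCyclic (Subgroup.closure S)) :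
    Nat.card (Subgroup.closure S) ≤ 22 := by
  classical
  obtain ⟨hPF, hmax⟩ := h
  have hSH : S ⊆ (Subgroup.closure S : Set G) := Subgroup.subset_closure
  obtain ⟨a, b, c, hab, hac, hbc, hS⟩ := Set.ncard_eq_three.mp hcard
  have haS : a ∈ S := by rw [hS]; left; rfl
  have hbS : b ∈ S := by rw [hS]; right; left; rfl
  have hcS : c ∈ S := by rw [hS]; right; right; rfl
  have h1S : (1 : G) ∉ S := fun h1 => hPF 1 h1 1 h1 (by simpa using h1)
  have hcomm := cyclic_sub_comm hcyc
  have cover : ∀ g : G, g ∈ S ∨ (∃ x ∈ S, ∃ y ∈ S, g = x * y) ∨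
      (∃ x ∈ S, ∃ y ∈ S, g = x * y⁻¹) ∨ (∃ x ∈ S, ∃ y ∈ S, g = x⁻¹ * y) ∨ g * g ∈ S := by
    intro g
    by_contra hg
    push_neg at hg
    obtain ⟨hg1, hg2, hg3, hg4, hg5⟩ := hg
    have hgne1 : g ≠ 1 := by
      intro hg1'
      exact hg3 a haS a haS (by rw [hg1', mul_inv_cancel])
    have hT : productFree (insert g S) := by
      rintro x (rfl | hx) y (rfl | hy) (h' | h')
      · exact hgne1 (mul_eq_left.mp h')
      · exact hg5 h'
      · exact h1S ((mul_eq_left.mp h') ▸ hy)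
      · exact hg3 (x * y) h' y hy (by group)
      · exact h1S ((mul_eq_right.mp h') ▸ hx)
      · exact hg4 x hx (x * y) h' (by group)
      · exact hg2 x hx y hy h'.symm
      · exact hPF x hx y hy h'
    have := hmax _ hT (Set.subset_insert g S)
    exact hg1 (this ▸ Set.mem_insert g S)
  have hba : b * a = a * b := hcomm b (hSH hbS) a (hSH haS)
  have hca : c * a = a * c := hcomm c (hSH hcS) a (hSH haS)
  have hcb : c * b = b * c := hcomm c (hSH hcS) b (hSH hbS)
  have hcover : (Subgroup.closure S : Set G) ⊆ S ∪ ({a * a, a * b, a * c, b * b, b * c, c * c} : Set G)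
      ∪ ({1, a * b⁻¹, b * a⁻¹, a * c⁻¹, c * a⁻¹, b * c⁻¹, c * b⁻¹} : Set G)
      ∪ {g : G | g ∈ Subgroup.closure S ∧ g * g ∈ S} := by
    intro g hgH
    rcases cover g with hg | ⟨x, hx, y, hy, rfl⟩ | ⟨x, hx, y, hy, rfl⟩ | ⟨x, hx, y, hy, rfl⟩ | hg
    · exact Or.inl (Or.inl (Or.inl hg))
    · refine Or.inl (Or.inl (Or.inr ?_))
      rw [hS] at hx hy
      rcases hx with rfl | rfl | rfl <;> rcases hy with rfl | rfl | rfl <;>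
        simp only [Set.mem_insert_iff, Set.mem_singleton_iff, hba, hca, hcb,
          eq_self_iff_true, true_or, or_true]
    · refine Or.inl (Or.inr ?_)
      rw [hS] at hx hy
      rcases hx with rfl | rfl | rfl <;> rcases hy with rfl | rfl | rfl <;>
        simp only [Set.mem_insert_iff, Set.mem_singleton_iff, mul_inv_cancel,
          eq_self_iff_true, true_or, or_true]
    · refine Or.inl (Or.inr ?_)
      have hyx : x⁻¹ * y = y * x⁻¹ := hcomm x⁻¹ (inv_mem (hSH hx)) y (hSH hy)
      rw [hyx]
      rw [hS] at hx hy
      rcases hx with rfl | rfl | rfl <;> rcases hy with rfl | rfl | rfl <;>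
        simp only [Set.mem_insert_iff, Set.mem_singleton_iff, mul_inv_cancel,
          eq_self_iff_true, true_or, or_true]
    · exact Or.inr ⟨hgH, hg⟩
  have hQsub : {g : G | g ∈ Subgroup.closure S ∧ g * g ∈ S} ⊆
      {g : G | g ∈ Subgroup.closure S ∧ g * g = a} ∪ {g : G | g ∈ Subgroup.closure S ∧ g * g = b}
      ∪ {g : G | g ∈ Subgroup.closure S ∧ g * g = c} := by
    rintro g ⟨hgH, hgS⟩
    rw [hS] at hgS
    rcases hgS with h' | h' | h'
    · exact Or.inl (Or.inl ⟨hgH, h'⟩)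
    · exact Or.inl (Or.inr ⟨hgH, h'⟩)
    · exact Or.inr ⟨hgH, h'⟩
  have hQcard : {g : G | g ∈ Subgroup.closure S ∧ g * g ∈ S}.ncard ≤ 6 := by
    have h1 := Set.ncard_le_ncard hQsub (Set.toFinite _)
    have h2 := Set.ncard_union_le ({g : G | g ∈ Subgroup.closure S ∧ g * g = a}
      ∪ {g : G | g ∈ Subgroup.closure S ∧ g * g = b}) {g : G | g ∈ Subgroup.closure S ∧ g * g = c}
    have h3 := Set.ncard_union_le {g : G | g ∈ Subgroup.closure S ∧ g * g = a}
      {g : G | g ∈ Subgroup.closure S ∧ g * g = b}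
    have ha := sqrt_ncard_le (Subgroup.closure S) hcyc a
    have hb := sqrt_ncard_le (Subgroup.closure S) hcyc b
    have hc := sqrt_ncard_le (Subgroup.closure S) hcyc c
    omega
  have hPcard : ({a * a, a * b, a * c, b * b, b * c, c * c} : Set G).ncard ≤ 6 := by
    refine le_trans (Set.ncard_insert_le _ _) ?_
    refine le_trans (Nat.add_le_add_right (Set.ncard_insert_le _ _) 1) ?_
    refine le_trans (Nat.add_le_add_right (Nat.add_le_add_right (Set.ncard_insert_le _ _) 1) 1) ?_
    refine le_trans (Nat.add_le_add_right (Nat.add_le_add_right (Nat.add_le_add_right (Set.ncard_insert_le _ _) 1) 1) 1) ?_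
    refine le_trans (Nat.add_le_add_right (Nat.add_le_add_right (Nat.add_le_add_right (Nat.add_le_add_right (Set.ncard_insert_le _ _) 1) 1) 1) 1) ?_
    have := Set.ncard_singleton (c * c)
    omega
  have hDcard : ({1, a * b⁻¹, b * a⁻¹, a * c⁻¹, c * a⁻¹, b * c⁻¹, c * b⁻¹} : Set G).ncard ≤ 7 := by
    refine le_trans (Set.ncard_insert_le _ _) ?_
    refine le_trans (Nat.add_le_add_right (Set.ncard_insert_le _ _) 1) ?_
    refine le_trans (Nat.add_le_add_right (Nat.add_le_add_right (Set.ncard_insert_le _ _) 1) 1) ?_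
    refine le_trans (Nat.add_le_add_right (Nat.add_le_add_right (Nat.add_le_add_right (Set.ncard_insert_le _ _) 1) 1) 1) ?_
    refine le_trans (Nat.add_le_add_right (Nat.add_le_add_right (Nat.add_le_add_right (Nat.add_le_add_right (Set.ncard_insert_le _ _) 1) 1) 1) 1) ?_
    refine le_trans (Nat.add_le_add_right (Nat.add_le_add_right (Nat.add_le_add_right (Nat.add_le_add_right (Nat.add_le_add_right (Set.ncard_insert_le _ _) 1) 1) 1) 1) 1) ?_
    have := Set.ncard_singleton (c * b⁻¹)
    omega
  have hmain : (Subgroup.closure S : Set G).ncard ≤ 22 := by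
    have hu1 := Set.ncard_le_ncard hcover (Set.toFinite _)
    have hu2 := Set.ncard_union_le (S ∪ ({a * a, a * b, a * c, b * b, b * c, c * c} : Set G)
      ∪ ({1, a * b⁻¹, b * a⁻¹, a * c⁻¹, c * a⁻¹, b * c⁻¹, c * b⁻¹} : Set G))
      {g : G | g ∈ Subgroup.closure S ∧ g * g ∈ S}
    have hu3 := Set.ncard_union_le (S ∪ ({a * a, a * b, a * c, b * b, b * c, c * c} : Set G))
      ({1, a * b⁻¹, b * a⁻¹, a * c⁻¹, c * a⁻¹, b * c⁻¹, c * b⁻¹} : Set G)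
    have hu4 := Set.ncard_union_le S ({a * a, a * b, a * c, b * b, b * c, c * c} : Set G)
    omega
  calc Nat.card (Subgroup.closure S) = (Subgroup.closure S : Set G).ncard :=
        Nat.card_coe_set_eq _
    _ ≤ 22 := hmain
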